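/- For every non-negative integer L, \(\sum_{j=-\infty}^{\infty} \left(\frac{j}{3}\right) q^{\binom{j-1}{2}} \binom{2L}{L+j}_q = \frac{(-1;q^3)_{L-1}}{(-1;q)_{L-1}}\, q^{L-1}\, \frac{1-q^3}{1-q}\,(1-q^L)\) when L > 0, and the sum equals 0 when L = 0. The sum is finite since the q-binomial coefficient vanishes for |j| > L. -/

import Mathlib

open Finset

/-- The finite q-Pochhammer symbol `(a;q)_n`. -/
noncomputable def qPoch (a q : RatFunc ℚ) (n : ℕ) : RatFunc ℚ :=
  ∏ k ∈ Finset.range n, (1 - a * q ^ k)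

/-- The q-binomial coefficient `[top choose bot]_q`, zero unless `0 ≤ bot ≤ top`. -/
noncomputable def qBinom (q : RatFunc ℚ) (top bot : ℤ) : RatFunc ℚ :=
  if 0 ≤ bot ∧ bot ≤ top then
    qPoch q q top.toNat / (qPoch q q bot.toNat * qPoch q q (top - bot).toNat)
  else 0

/-- The Legendre symbol modulo 3. -/
def leg3 (j : ℤ) : ℤ := if j % 3 = 1 then 1 else if j % 3 = 2 then -1 else 0

/-- `1/(q;q)_k`, with the convention that it is zero for negative `k`. -/
noncomputable def invPoch (q : RatFunc ℚ) (k : ℤ) : RatFunc ℚ :=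
  if 0 ≤ k then (qPoch q q k.toNat)⁻¹ else 0

/-- The generic variable `q` in the field of rational functions. -/
noncomputable def Xq : RatFunc ℚ := RatFunc.X

namespace Stmt6Aux

open Polynomial

abbrev F := RatFunc ℚ

lemma Xq_eq : Xq = algebraMap ℚ[X] F X := (RatFunc.algebraMap_X).symm

lemma algF_inj : Function.Injective (algebraMap ℚ[X] F) := RatFunc.algebraMap_injective ℚ

lemma one_sub_Xq_pow_ne (k : ℕ) (hk : 1 ≤ k) : (1 : F) - Xq ^ k ≠ 0 := by
  rw [Xq_eq, ← map_pow, ← map_one (algebraMap ℚ[X] F), ← map_sub]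
  intro h
  have h2 : (1 : ℚ[X]) - X ^ k = 0 := algF_inj (by simpa using h)
  have h3 : (1 : ℚ[X]) = X ^ k := by linear_combination h2
  have := congrArg Polynomial.natDegree h3
  simp [Polynomial.natDegree_X_pow] at this
  omega

lemma one_add_Xq_pow_ne (k : ℕ) : (1 : F) + Xq ^ k ≠ 0 := by
  rcases Nat.eq_zero_or_pos k with rfl | hk
  · intro hcon
    rw [pow_zero] at hcon
    have h2' : ((2:ℚ[X])) = 0 := by
      apply algF_inj
      rw [map_ofNat, map_zero]
      linear_combination hcon
    norm_num at h2'
  rw [Xq_eq, ← map_pow, ← map_one (algebraMap ℚ[X] F), ← map_add]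
  intro h
  have h2 : (1 : ℚ[X]) + X ^ k = 0 := algF_inj (by simpa using h)
  have h5 := congrArg (fun p => Polynomial.coeff p k) h2
  simp only [Polynomial.coeff_add, Polynomial.coeff_one, Polynomial.coeff_X_pow,
    Polynomial.coeff_zero, if_pos rfl, if_neg (by omega : ¬ k = 0)] at h5
  norm_num at h5

lemma qPoch_q_ne (n : ℕ) : qPoch Xq Xq n ≠ 0 := by
  unfold qPoch
  apply Finset.prod_ne_zero_iff.mpr
  intro k _
  have : (1 : F) - Xq * Xq ^ k = 1 - Xq ^ (k+1) := by ring
  rw [this]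
  exact one_sub_Xq_pow_ne _ (by omega)

lemma Xq_ne_zero : (Xq : F) ≠ 0 := by
  rw [Xq_eq]
  simpa using RatFunc.algebraMap_ne_zero (Polynomial.X_ne_zero (R := ℚ))

lemma no_sqrt_neg3 (y : F) : y ^ 2 ≠ -3 := by
  intro h
  have hd := RatFunc.denom_ne_zero y
  have hnd := RatFunc.num_div_denom y
  have hden : algebraMap ℚ[X] F y.denom ≠ 0 := RatFunc.algebraMap_ne_zero hd
  have h1 : y * algebraMap ℚ[X] F y.denom = algebraMap ℚ[X] F y.num := by
    nth_rewrite 1 [← hnd]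
    rw [div_mul_cancel₀ _ hden]
  have h2 : algebraMap ℚ[X] F (y.num ^ 2 + 3 * y.denom ^ 2) = 0 := by
    have hnum : (algebraMap ℚ[X] F y.num) ^ 2 = -3 * (algebraMap ℚ[X] F y.denom) ^ 2 := by
      rw [← h1, mul_pow, h]
      try ring
    rw [map_add, map_mul, map_pow, map_pow, hnum, map_ofNat]
    try ring
  have h3 : y.num ^ 2 + 3 * y.denom ^ 2 = 0 := algF_inj (by simpa using h2)
  have h4 : (y.num ^ 2).leadingCoeff = ((- 3 : ℚ[X]) * y.denom ^ 2).leadingCoeff := by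
    rw [show y.num ^2 = (-3 : ℚ[X]) * y.denom ^2 by linear_combination h3]
  have hc3 : ((-3 : ℚ[X])) = Polynomial.C (-3 : ℚ) := by
    rw [map_neg, ← map_ofNat Polynomial.C 3]
  rw [Polynomial.leadingCoeff_pow, hc3, Polynomial.leadingCoeff_mul, Polynomial.leadingCoeff_pow,
    Polynomial.leadingCoeff_C] at h4
  have hdc : y.denom.leadingCoeff ≠ 0 := Polynomial.leadingCoeff_ne_zero.mpr hd
  nlinarith [sq_nonneg y.num.leadingCoeff, sq_nonneg y.denom.leadingCoeff,
    sq_abs y.denom.leadingCoeff, pow_pos (abs_pos.mpr hdc) 2]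

noncomputable def Pw : F[X] := X ^ 2 + X + 1

lemma Pw_natDegree : Pw.natDegree = 2 := by
  unfold Pw
  compute_degree!

lemma Pw_irred : Irreducible Pw := by
  rw [Polynomial.irreducible_iff_roots_eq_zero_of_degree_le_three
    (by rw [Pw_natDegree]) (by rw [Pw_natDegree]; omega)]
  by_contra hne
  have : ∃ y, IsRoot Pw y := by
    rcases Multiset.exists_mem_of_ne_zero hne with ⟨y, hy⟩
    exact ⟨y, (Polynomial.isRoot_of_mem_roots hy)⟩
  rcases this with ⟨y, hy⟩
  have h0 : y ^ 2 + y + 1 = 0 := by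
    have := hy
    simp [Pw, IsRoot, eval_add, eval_pow] at this
    linear_combination this
  exact no_sqrt_neg3 (2*y+1) (by linear_combination 4 * h0)

instance Pw_fact : Fact (Irreducible Pw) := ⟨Pw_irred⟩

noncomputable abbrev K := AdjoinRoot Pw

noncomputable def ω : K := AdjoinRoot.root Pw

noncomputable def φ : F →+* K := algebraMap F K

lemma φ_inj : Function.Injective φ := φ.injective

lemma omega_rel : ω ^ 2 + ω + 1 = 0 := by
  unfold ω Pw
  have h := AdjoinRoot.eval₂_root (X ^ 2 + X + 1 : F[X])
  simp only [eval₂_add, eval₂_pow, eval₂_X, eval₂_one] at h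
  exact h

lemma omega_cube : ω * ω * ω = 1 := by
  linear_combination (ω - 1) * omega_rel

lemma omega_ne_zero : ω ≠ 0 := by
  intro h
  have := omega_rel
  rw [h] at this
  norm_num at this

lemma omega_sq_ne_zero : ω * ω ≠ 0 := mul_ne_zero omega_ne_zero omega_ne_zero

lemma charK : ((3:K)) ≠ 0 := by
  intro h
  have h2 : φ 3 = 0 := by rw [map_ofNat]; exact h
  have h3 : ((3:F)) = 0 := φ_inj (by rw [h2, map_zero])
  have h4 : ((3:ℚ[X])) = 0 := (RatFunc.algebraMap_injective ℚ)
    (by rw [map_ofNat, map_zero]; exact h3)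
  norm_num at h4

lemma charK2 : ((2:K)) ≠ 0 := by
  intro h
  have h2 : φ 2 = 0 := by rw [map_ofNat]; exact h
  have h3 : ((2:F)) = 0 := φ_inj (by rw [h2, map_zero])
  have h4 : ((2:ℚ[X])) = 0 := (RatFunc.algebraMap_injective ℚ)
    (by rw [map_ofNat, map_zero]; exact h3)
  norm_num at h4

lemma omega_sub_ne : ω - ω * ω ≠ 0 := by
  intro h
  have hs : 2 * ω + 1 = 0 := by linear_combination omega_rel + h
  exact charK (by linear_combination (-4 : K) * h + (-2*ω+3) * hs)

lemma omega_sq_cube : (ω*ω) * (ω*ω) * (ω*ω) = 1 := by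
  linear_combination (ω*ω*ω + 1) * omega_cube

lemma omega_sq_sq : (ω*ω) * (ω*ω) = ω := by
  linear_combination ω * omega_cube

lemma omega_sum : ω + ω * ω = -1 := by
  linear_combination omega_rel

noncomputable def qK : K := φ Xq

lemma qK_ne : qK ≠ 0 := by
  intro h
  exact Xq_ne_zero (φ_inj (by rw [map_zero]; exact h))

lemma one_sub_qK_pow_ne (k : ℕ) (hk : 1 ≤ k) : (1 : K) - qK ^ k ≠ 0 := by
  intro h
  apply one_sub_Xq_pow_ne k hk
  apply φ_inj
  rw [map_sub, map_one, map_pow, map_zero]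
  exact h

lemma one_add_qK_pow_ne (k : ℕ) : (1 : K) + qK ^ k ≠ 0 := by
  intro h
  apply one_add_Xq_pow_ne k
  apply φ_inj
  rw [map_add, map_one, map_pow, map_zero]
  exact h

/- ## q-binomial basics -/

lemma qPoch_succ (a q : RatFunc ℚ) (n : ℕ) :
    qPoch a q (n+1) = qPoch a q n * (1 - a * q ^ n) := Finset.prod_range_succ _ _

lemma qPoch_zero (a q : RatFunc ℚ) : qPoch a q 0 = 1 := Finset.prod_range_zero _

lemma qBinom_nat (n m : ℕ) (h : m ≤ n) :
    qBinom Xq n m = qPoch Xq Xq n / (qPoch Xq Xq m * qPoch Xq Xq (n - m)) := by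
  unfold qBinom
  rw [if_pos ⟨Int.ofNat_nonneg m, by exact_mod_cast h⟩]
  have h1 : ((n:ℤ)).toNat = n := Int.toNat_natCast n
  have h2 : ((m:ℤ)).toNat = m := Int.toNat_natCast m
  have h3 : ((n:ℤ) - m).toNat = n - m := by omega
  rw [h1, h2, h3]

lemma qBinom_neg (n : ℕ) (m : ℤ) (h : m < 0 ∨ (n:ℤ) < m) : qBinom Xq n m = 0 := by
  unfold qBinom
  rw [if_neg]
  omega

lemma pascal (n m : ℕ) (h : m ≤ n + 1) :
    qBinom Xq (n+1) m = qBinom Xq n m + Xq ^ (n+1-m) * qBinom Xq n ((m:ℤ)-1) := by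
  rcases m with _ | s
  · simp only [Nat.cast_zero, Nat.sub_zero, zero_sub]
    have b1 := qBinom_nat (n+1) 0 (by omega)
    have b2 := qBinom_nat n 0 (by omega)
    have b3 := qBinom_neg n (-1) (by omega)
    push_cast at b1 b2 b3 ⊢
    rw [b1, b2, b3]
    simp only [Nat.sub_zero]
    have h0 : qPoch Xq Xq 0 = 1 := by simp [qPoch]
    rw [h0, one_mul, one_mul, div_self (qPoch_q_ne _), div_self (qPoch_q_ne _)]
    ring
  · have hs1 : ((s:ℤ) + 1 - 1) = s := by ring
    have hcast : (((s+1 : ℕ)):ℤ) = (s:ℤ) + 1 := by push_cast; ring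
    rw [hcast, hs1]
    rcases Nat.lt_or_ge s n with hlt | hge
    · obtain ⟨r, hr⟩ : ∃ r, n = s + 1 + r := ⟨n - s - 1, by omega⟩
      subst hr
      have b1 := qBinom_nat (s+1+r+1) (s+1) (by omega)
      have b2 := qBinom_nat (s+1+r) (s+1) (by omega)
      have b3 := qBinom_nat (s+1+r) s (by omega)
      push_cast at b1 b2 b3 ⊢
      rw [b1, b2, b3]
      have e2 : s + 1 + r - (s+1) = r := by omega
      have e3 : s + 1 + r - s = r + 1 := by omega
      simp only [e2, e3]
      have hP1 : qPoch Xq Xq (s+1+r+1) = qPoch Xq Xq (s+1+r) * (1 - Xq ^ (s+1+r+1)) := by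
        rw [qPoch_succ]; ring_nf
      have hP2 : qPoch Xq Xq (r+1) = qPoch Xq Xq r * (1 - Xq ^ (r+1)) := by
        rw [qPoch_succ]; ring_nf
      have hP3 : qPoch Xq Xq (s+1) = qPoch Xq Xq s * (1 - Xq ^ (s+1)) := by
        rw [qPoch_succ]; ring_nf
      rw [hP1, hP2, hP3]
      have n1 := qPoch_q_ne (s+1+r)
      have n2 := qPoch_q_ne r
      have n3 := qPoch_q_ne s
      have n4 : (1:F) - Xq ^ (s+1) ≠ 0 := one_sub_Xq_pow_ne _ (by omega)
      have n5 : (1:F) - Xq ^ (r+1) ≠ 0 := one_sub_Xq_pow_ne _ (by omega)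
      field_simp
      ring
    · have hsn : s = n := by omega
      subst hsn
      have b1 := qBinom_nat (s+1) (s+1) (by omega)
      have b2 := qBinom_neg s (s+1) (by omega)
      have b3 := qBinom_nat s s (by omega)
      push_cast at b1 b2 b3 ⊢
      rw [b1, b2, b3]
      simp only [Nat.sub_self, zero_add, Nat.add_sub_cancel]
      have h0 : qPoch Xq Xq 0 = 1 := by simp [qPoch]
      rw [h0]
      have n3 := qPoch_q_ne s
      have n4 := qPoch_q_ne (s+1)
      field_simp

lemma choose_two_succ (m : ℕ) : (m+1).choose 2 = m.choose 2 + m := by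
  rw [Nat.choose_succ_succ]
  simp [Nat.choose_one_right]
  omega

theorem gauss (n : ℕ) (z : K) :
    ∏ i ∈ Finset.range n, (1 + z * qK ^ i) =
      ∑ m ∈ Finset.range (n+1), qK ^ (m.choose 2) * φ (qBinom Xq n m) * z ^ m := by
  induction n with
  | zero =>
    norm_num
    have h00 := qBinom_nat 0 0 (le_refl 0)
    simp only [Nat.cast_zero, Nat.sub_zero] at h00 ⊢
    rw [h00]
    have hp : qPoch Xq Xq 0 = 1 := by simp [qPoch]
    rw [hp]
    norm_num
  | succ n ih =>
    rw [Finset.prod_range_succ, ih, mul_add, mul_one]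
    push_cast
    have expand : ∀ m ∈ Finset.range (n+1+1),
        qK ^ (m.choose 2) * φ (qBinom Xq ((n:ℤ)+1) m) * z ^ m
        = qK ^ (m.choose 2) * φ (qBinom Xq n m) * z ^ m
          + qK ^ (m.choose 2) * qK ^ (n+1-m) * φ (qBinom Xq n ((m:ℤ)-1)) * z ^ m := by
      intro m hm
      rw [Finset.mem_range] at hm
      have hp := pascal n m (by omega)
      push_cast at hp
      rw [hp, map_add, map_mul, map_pow]
      rw [show φ Xq = qK from rfl]
      ring
    rw [Finset.sum_congr rfl expand, Finset.sum_add_distrib]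
    congr 1
    · conv_rhs => rw [Finset.sum_range_succ]
      have hz : qBinom Xq (n:ℤ) ((n+1 : ℕ) : ℤ) = 0 := qBinom_neg n _ (by right; push_cast; omega)
      push_cast at hz ⊢
      rw [hz, map_zero]
      ring
    · conv_rhs => rw [Finset.sum_range_succ']
      have h0 : qBinom Xq (n:ℤ) ((0:ℤ)-1) = 0 := qBinom_neg n _ (by left; omega)
      have heq : ∀ i ∈ Finset.range (n+1),
          qK ^ ((i+1).choose 2) * qK ^ (n+1-(i+1)) * φ (qBinom Xq n ((((i+1:ℕ)):ℤ)-1)) * z ^ (i+1)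
          = (qK ^ (i.choose 2) * φ (qBinom Xq n i) * z ^ i) * (z * qK ^ n) := by
        intro i hi
        rw [Finset.mem_range] at hi
        have hc : (i+1).choose 2 = i.choose 2 + i := choose_two_succ i
        have hni : n+1-(i+1) = n - i := by omega
        have hcast : ((i+1:ℕ):ℤ) - 1 = (i:ℤ) := by push_cast; ring
        rw [hc, hni, hcast]
        have key : qK ^ (i.choose 2 + i) * qK ^ (n-i) = qK ^ (i.choose 2) * qK ^ n := by
          rw [← pow_add, ← pow_add]
          congr 1
          omega
        linear_combination φ (qBinom Xq (n:ℤ) (i:ℤ)) * z ^ i * z * key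
      conv_rhs => rw [Finset.sum_congr rfl heq]
      simp only [Nat.cast_zero, pow_zero, mul_one]
      rw [h0, map_zero, mul_zero, add_zero, ← Finset.sum_mul]

lemma prod_zpow_sum (b : K) (hb : b ≠ 0) (n : ℕ) (f : ℕ → ℤ) :
    ∏ i ∈ Finset.range n, b ^ f i = b ^ (∑ i ∈ Finset.range n, f i) := by
  induction n with
  | zero => simp
  | succ n ih => rw [Finset.prod_range_succ, Finset.sum_range_succ, ih, zpow_add₀ hb]

lemma keyprod (u : K) (hu3 : u * u * u = 1) (hu0 : u ≠ 0) (L : ℕ) (hL : 2 ≤ L) :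
    u ^ (-(L:ℤ)) * qK ^ (((L+1)*(L+2)/2 : ℕ) : ℤ) *
      ∏ i ∈ Finset.range (2*L), (1 + (u * qK ^ (-((L:ℤ)+1))) * qK ^ i)
    = (u + u*u) * (∏ k ∈ Finset.range (L+1), (1 + u*u*qK ^ (k+1))) *
        (∏ i ∈ Finset.range (L-2), (1 + u * qK ^ (i+1))) := by
  have h2L : 2*L = (L+1) + (L-1) := by omega
  rw [h2L, Finset.prod_range_add]
  have hP2 : (∏ x ∈ Finset.range (L-1), (1 + (u * qK ^ (-((L:ℤ)+1))) * qK ^ (L+1+x)))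
      = (∏ i ∈ Finset.range (L-2), (1 + u * qK ^ (i+1))) * (1 + u) := by
    have hpart2 : ∀ i ∈ Finset.range (L-1),
        (1 + (u * qK ^ (-((L:ℤ)+1))) * qK ^ (L+1+i)) = 1 + u * qK ^ i := by
      intro i _
      have : (u * qK ^ (-((L:ℤ)+1))) * qK ^ (L+1+i) = u * qK ^ i := by
        rw [mul_assoc, ← zpow_natCast qK (L+1+i), ← zpow_natCast qK i, ← zpow_add₀ qK_ne]
        congr 1
        push_cast
        ring
      rw [this]
    rw [Finset.prod_congr rfl hpart2]
    have hL1 : L - 1 = (L-2) + 1 := by omega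
    rw [hL1, Finset.prod_range_succ']
    simp
  have hP1 : (∏ x ∈ Finset.range (L+1), (1 + (u * qK ^ (-((L:ℤ)+1))) * qK ^ x))
      = u ^ (L+1) * qK ^ (-(((L+1)*(L+2)/2 : ℕ) : ℤ)) *
        ∏ k ∈ Finset.range (L+1), (1 + u*u*qK ^ (k+1)) := by
    have hpart1 : ∀ i ∈ Finset.range (L+1),
        (1 + (u * qK ^ (-((L:ℤ)+1))) * qK ^ i)
        = (u * qK ^ ((i:ℤ) - ((L:ℤ)+1))) * (1 + u*u*qK ^ (L+1-i)) := by
      intro i hi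
      rw [Finset.mem_range] at hi
      have e1 : (u * qK ^ (-((L:ℤ)+1))) * qK ^ i = u * qK ^ ((i:ℤ) - ((L:ℤ)+1)) := by
        rw [mul_assoc, ← zpow_natCast qK i, ← zpow_add₀ qK_ne,
          show (-((L:ℤ)+1) + (i:ℤ)) = (i:ℤ) - ((L:ℤ)+1) from by ring]
      have e2 : u * qK ^ ((i:ℤ) - ((L:ℤ)+1)) * (u * u * qK ^ (L+1-i)) = 1 := by
        rw [← zpow_natCast qK (L+1-i)]
        have h0 : qK ^ ((i:ℤ) - ((L:ℤ)+1)) * qK ^ (((L+1-i : ℕ)):ℤ) = 1 := by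
          rw [← zpow_add₀ qK_ne]
          have : ((i:ℤ) - ((L:ℤ)+1)) + ((L+1-i : ℕ):ℤ) = 0 := by
            push_cast [Nat.cast_sub (by omega : i ≤ L+1)]
            ring
          rw [this, zpow_zero]
        calc u * qK ^ ((i:ℤ) - ((L:ℤ)+1)) * (u*u*qK ^ (((L+1-i:ℕ)):ℤ))
            = (u*u*u) * (qK ^ ((i:ℤ) - ((L:ℤ)+1)) * qK ^ (((L+1-i:ℕ)):ℤ)) := by ring
          _ = 1 := by rw [hu3, h0, mul_one]
      linear_combination e1 - e2
    rw [Finset.prod_congr rfl hpart1, Finset.prod_mul_distrib, Finset.prod_mul_distrib,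
      Finset.prod_const, Finset.card_range, prod_zpow_sum qK qK_ne]
    have hsum : (∑ i ∈ Finset.range (L+1), ((i:ℤ) - ((L:ℤ)+1)))
        = -(((L+1)*(L+2)/2 : ℕ) : ℤ) := by
      rw [Finset.sum_sub_distrib, Finset.sum_const, Finset.card_range]
      have h1 : (∑ i ∈ Finset.range (L+1), (i:ℤ)) = ((∑ i ∈ Finset.range (L+1), i : ℕ) : ℤ) := by
        push_cast
        ring
      have h2 : (∑ i ∈ Finset.range (L+1), i) * 2 = (L+1) * L := Finset.sum_range_id_mul_two (L+1)
      have h3 : ((L+1)*(L+2)/2 : ℕ) * 2 = (L+1)*(L+2) := by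
        apply Nat.div_mul_cancel
        rcases Nat.even_or_odd L with h | h
        · exact Dvd.dvd.mul_left (by rcases h with ⟨t,ht⟩; omega : 2 ∣ (L+2)) _
        · exact Dvd.dvd.mul_right (by rcases h with ⟨t,ht⟩; omega : 2 ∣ (L+1)) _
      rw [h1, nsmul_eq_mul]
      have hc : ((((L+1)*(L+2)/2 : ℕ)):ℤ) * 2 = ((L:ℤ)+1)*((L:ℤ)+2) := by exact_mod_cast h3
      have hs : ((∑ i ∈ Finset.range (L+1), i : ℕ):ℤ) * 2 = ((L:ℤ)+1)*(L:ℤ) := by exact_mod_cast h2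
      have hcast : ((L+1:ℕ):ℤ) = (L:ℤ)+1 := by push_cast; ring
      rw [hcast]
      linarith
    rw [hsum]
    have hrefl : (∏ i ∈ Finset.range (L+1), (1 + u*u*qK ^ (L+1-i)))
        = ∏ k ∈ Finset.range (L+1), (1 + u*u*qK ^ (k+1)) := by
      rw [← Finset.prod_range_reflect (fun k => 1 + u*u*qK ^ (k+1)) (L+1)]
      apply Finset.prod_congr rfl
      intro i hi
      rw [Finset.mem_range] at hi
      have : (L+1) - 1 - i + 1 = L+1-i := by omega
      rw [this]
    rw [hrefl]
  rw [hP1, hP2]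
  have hqc : qK ^ (((L+1)*(L+2)/2 : ℕ) : ℤ) * qK ^ (-(((L+1)*(L+2)/2 : ℕ) : ℤ)) = 1 := by
    rw [← zpow_add₀ qK_ne]
    simp
  have hu' : u ^ (-(L:ℤ)) * u ^ (L+1) = u := by
    rw [show u ^ (L+1) = u ^ (((L+1 : ℕ)):ℤ) from (zpow_natCast u (L+1)).symm, ← zpow_add₀ hu0]
    have : (-(L:ℤ)) + ((L+1 : ℕ):ℤ) = 1 := by push_cast; ring
    rw [this, zpow_one]
  calc u ^ (-(L:ℤ)) * qK ^ (((L+1)*(L+2)/2 : ℕ) : ℤ) *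
      ((u ^ (L+1) * qK ^ (-(((L+1)*(L+2)/2 : ℕ) : ℤ)) *
          ∏ k ∈ Finset.range (L+1), (1 + u*u*qK ^ (k+1))) *
        ((∏ i ∈ Finset.range (L-2), (1 + u * qK ^ (i+1))) * (1 + u)))
      = (u ^ (-(L:ℤ)) * u ^ (L+1)) *
          (qK ^ (((L+1)*(L+2)/2 : ℕ) : ℤ) * qK ^ (-(((L+1)*(L+2)/2 : ℕ) : ℤ))) *
        (1+u) * (∏ k ∈ Finset.range (L+1), (1 + u*u*qK ^ (k+1))) *
        (∏ i ∈ Finset.range (L-2), (1 + u * qK ^ (i+1))) := by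
        ring
    _ = (u + u*u) * (∏ k ∈ Finset.range (L+1), (1 + u*u*qK ^ (k+1))) *
        (∏ i ∈ Finset.range (L-2), (1 + u * qK ^ (i+1))) := by
        rw [hu', hqc]
        ring

end Stmt6Aux

namespace Stmt6Aux

lemma E_eq (L m : ℕ) :
    ((((m:ℤ)-L) - 1) * (((m:ℤ)-L) - 2)) / 2
      = (m.choose 2 : ℤ) - ((L:ℤ)+1)*m + (((L+1)*(L+2)/2 : ℕ) : ℤ) := by
  have he : (2:ℤ) ∣ (((m:ℤ)-L-1) * ((m:ℤ)-L-2)) := by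
    rcases Int.even_mul_succ_self ((m:ℤ)-L-2) with ⟨t, ht⟩
    exact ⟨t, by linarith [ht]⟩
  have h1 : 2 * ((((m:ℤ)-L-1)*((m:ℤ)-L-2))/2) = ((m:ℤ)-L-1)*((m:ℤ)-L-2) :=
    Int.mul_ediv_cancel' he
  have h2 : 2 * (m.choose 2 : ℤ) = (m:ℤ)*((m:ℤ)-1) := by
    rcases m with _ | s
    · simp
    · have hn : (s+1).choose 2 * 2 = (s+1) * s := by
        rw [Nat.choose_two_right]
        simp only [Nat.add_sub_cancel]
        apply Nat.div_mul_cancel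
        rcases Nat.even_or_odd s with h | h
        · exact Dvd.dvd.mul_left (by rcases h with ⟨t,ht⟩; omega : 2 ∣ s) _
        · exact Dvd.dvd.mul_right (by rcases h with ⟨t,ht⟩; omega : 2 ∣ (s+1)) _
      have := congrArg (fun x : ℕ => (x:ℤ)) hn
      push_cast at this
      push_cast
      linarith
  have h3 : 2 * ((((L+1)*(L+2)/2 : ℕ)):ℤ) = ((L:ℤ)+1)*((L:ℤ)+2) := by
    have h3n : ((L+1)*(L+2)/2 : ℕ) * 2 = (L+1)*(L+2) := by
      apply Nat.div_mul_cancel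
      rcases Nat.even_or_odd L with h | h
      · exact Dvd.dvd.mul_left (by rcases h with ⟨t,ht⟩; omega : 2 ∣ (L+2)) _
      · exact Dvd.dvd.mul_right (by rcases h with ⟨t,ht⟩; omega : 2 ∣ (L+1)) _
    have hc : ((((L+1)*(L+2)/2 : ℕ)):ℤ) * 2 = ((L:ℤ)+1)*((L:ℤ)+2) := by exact_mod_cast h3n
    linarith
  have key : 2 * (((((m:ℤ)-L) - 1) * (((m:ℤ)-L) - 2)) / 2)
      = 2 * ((m.choose 2 : ℤ) - ((L:ℤ)+1)*m + (((L+1)*(L+2)/2 : ℕ) : ℤ)) := by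
    rw [show ((((m:ℤ)-L) - 1) * (((m:ℤ)-L) - 2)) = (((m:ℤ)-L-1)*((m:ℤ)-L-2)) from by ring, h1]
    linear_combination -h2 - h3
  linarith

end Stmt6Aux

namespace Stmt6Aux

lemma leg3_omega (j : ℤ) : ((leg3 j : ℤ) : K) * (ω - ω*ω) = ω ^ j - (ω*ω) ^ j := by
  have hj : j = 3 * (j / 3) + j % 3 := (Int.mul_ediv_add_emod j 3).symm
  have hr : j % 3 = 0 ∨ j % 3 = 1 ∨ j % 3 = 2 := by omega
  have hsplit : ∀ (u : K), u*u*u = 1 → u ≠ 0 → u ^ j = u ^ (j % 3) := by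
    intro u hu3 hu0
    conv_lhs => rw [hj]
    have hu3' : u ^ (3:ℤ) = 1 := by
      rw [show (3:ℤ) = ((3:ℕ):ℤ) from rfl, zpow_natCast]
      calc u ^ 3 = u * u * u := by ring
        _ = 1 := hu3
    rw [zpow_add₀ hu0, zpow_mul, hu3', one_zpow, one_mul]
  rw [hsplit ω omega_cube omega_ne_zero, hsplit (ω*ω) omega_sq_cube omega_sq_ne_zero]
  have hleg : leg3 j = if j % 3 = 1 then 1 else if j % 3 = 2 then -1 else 0 := rfl
  rcases hr with h | h | h
  · rw [hleg, h]
    norm_num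
  · rw [hleg, h]
    norm_num
  · rw [hleg, h]
    norm_num
    linear_combination ω * omega_cube

lemma Tsum (u : K) (hu3 : u * u * u = 1) (hu0 : u ≠ 0) (L : ℕ) :
    ∑ m ∈ Finset.range (2*L+1),
      u ^ ((m:ℤ) - L) * qK ^ ((((m:ℤ)-L) - 1) * (((m:ℤ)-L) - 2) / 2) * φ (qBinom Xq (2*L) m)
    = u ^ (-(L:ℤ)) * qK ^ (((L+1)*(L+2)/2 : ℕ) : ℤ) *
        ∏ i ∈ Finset.range (2*L), (1 + (u * qK ^ (-((L:ℤ)+1))) * qK ^ i) := by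
  rw [gauss (2*L) (u * qK ^ (-((L:ℤ)+1))), Finset.mul_sum]
  apply Finset.sum_congr rfl
  intro m hm
  have hE := E_eq L m
  rw [hE]
  have hU : u ^ ((m:ℤ) - L) = u ^ (-(L:ℤ)) * u ^ m := by
    rw [← zpow_natCast u m, ← zpow_add₀ hu0]
    congr 1
    ring
  have hQ : qK ^ ((m.choose 2 : ℤ) - ((L:ℤ)+1)*m + (((L+1)*(L+2)/2 : ℕ) : ℤ))
      = qK ^ (((L+1)*(L+2)/2 : ℕ) : ℤ) * (qK ^ (-((L:ℤ)+1))) ^ m * qK ^ (m.choose 2) := by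
    rw [show (m.choose 2 : ℤ) - ((L:ℤ)+1)*m + (((L+1)*(L+2)/2 : ℕ) : ℤ)
        = (((L+1)*(L+2)/2 : ℕ) : ℤ) + (-((L:ℤ)+1))*(m:ℤ) + ((m.choose 2 : ℕ) : ℤ) from by
          push_cast; ring,
      zpow_add₀ qK_ne, zpow_add₀ qK_ne, zpow_mul, zpow_natCast, zpow_natCast, zpow_natCast]
  rw [hU, hQ, mul_pow]
  push_cast
  ring

lemma reindex (L : ℕ) (f : ℤ → F) :
    ∑ j ∈ Finset.Icc (-(L:ℤ)) (L:ℤ), f j = ∑ m ∈ Finset.range (2*L+1), f ((m:ℤ) - L) := by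
  refine Finset.sum_nbij' (fun j => (j + L).toNat) (fun m => (m:ℤ) - L) ?_ ?_ ?_ ?_ ?_
  · intro a ha
    simp only [Finset.mem_Icc] at ha
    simp only [Finset.mem_range]
    omega
  · intro a ha
    simp only [Finset.mem_range] at ha
    simp only [Finset.mem_Icc]
    omega
  · intro a ha
    simp only [Finset.mem_Icc] at ha
    omega
  · intro a ha
    simp only [Finset.mem_range] at ha
    omega
  · intro a ha
    simp only [Finset.mem_Icc] at ha
    show f a = f (((a + (L:ℤ)).toNat : ℤ) - L)
    congr 1
    omega

lemma cubefact (x : K) : (1 + (ω*ω)*x) * (1 + ω*x) * (1+x) = 1 + x*x*x := by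
  linear_combination (x + x*x) * omega_rel + (x*x + x*x*x) * omega_cube

lemma tripdiff (a b c : K) :
    (1+(ω*ω)*a)*(1+(ω*ω)*b)*(1+(ω*ω)*c) - (1+ω*a)*(1+ω*b)*(1+ω*c)
    = -(ω - ω*ω) * ((a+b+c) - (a*b+a*c+b*c)) := by
  linear_combination (ω*(a*b+a*c+b*c) + ω*ω*ω*(a*b*c)) * omega_cube

lemma main2 (L : ℕ) (hL : 2 ≤ L) :
    ∑ j ∈ Finset.Icc (-(L : ℤ)) (L : ℤ),
      (leg3 j : F) * Xq ^ ((j - 1) * (j - 2) / 2) * qBinom Xq (2 * L) ((L : ℤ) + j) =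
    qPoch (-1) (Xq ^ 3) (L - 1) / qPoch (-1) Xq (L - 1) * Xq ^ (L - 1) *
        ((1 - Xq ^ 3) / (1 - Xq)) * (1 - Xq ^ L) := by
  apply φ_inj
  rw [reindex L, map_sum]
  -- abbreviations (as plain terms)
  have hterm : ∀ m ∈ Finset.range (2*L+1),
      φ ((leg3 ((m:ℤ) - L) : F) * Xq ^ ((((m:ℤ)-L) - 1) * (((m:ℤ)-L) - 2) / 2) *
          qBinom Xq (2 * L) ((L : ℤ) + ((m:ℤ) - L)))
      = ((leg3 ((m:ℤ) - L) : ℤ) : K) * qK ^ ((((m:ℤ)-L) - 1) * (((m:ℤ)-L) - 2) / 2) *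
          φ (qBinom Xq (2*L) m) := by
    intro m hm
    have harg : (L : ℤ) + ((m:ℤ) - L) = (m:ℤ) := by ring
    rw [harg, map_mul, map_mul, map_zpow₀, map_intCast]
    norm_cast
  rw [Finset.sum_congr rfl hterm]
  apply mul_left_cancel₀ omega_sub_ne
  rw [Finset.mul_sum]
  have hterm2 : ∀ m ∈ Finset.range (2*L+1),
      (ω - ω*ω) * (((leg3 ((m:ℤ) - L) : ℤ) : K) * qK ^ ((((m:ℤ)-L) - 1) * (((m:ℤ)-L) - 2) / 2) *
          φ (qBinom Xq (2*L) m))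
      = ω ^ ((m:ℤ) - L) * qK ^ ((((m:ℤ)-L) - 1) * (((m:ℤ)-L) - 2) / 2) * φ (qBinom Xq (2*L) m)
        - (ω*ω) ^ ((m:ℤ) - L) * qK ^ ((((m:ℤ)-L) - 1) * (((m:ℤ)-L) - 2) / 2) *
            φ (qBinom Xq (2*L) m) := by
    intro m hm
    have := leg3_omega ((m:ℤ) - L)
    linear_combination qK ^ ((((m:ℤ)-L) - 1) * (((m:ℤ)-L) - 2) / 2) * φ (qBinom Xq (2*L) m) * this
  rw [Finset.sum_congr rfl hterm2, Finset.sum_sub_distrib,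
    Tsum ω omega_cube omega_ne_zero L, Tsum (ω*ω) omega_sq_cube omega_sq_ne_zero L,
    keyprod ω omega_cube omega_ne_zero L hL, keyprod (ω*ω) omega_sq_cube omega_sq_ne_zero L hL]
  simp only [omega_sq_sq]
  -- now product manipulations
  have hsplit : ∀ v : K, (∏ k ∈ Finset.range (L+1), (1 + v*qK ^ (k+1)))
      = (∏ k ∈ Finset.range (L-2), (1 + v*qK ^ (k+1))) *
        ((1 + v*qK ^ (L-1)) * (1 + v*(qK ^ (L-1)*qK)) * (1 + v*(qK ^ (L-1)*qK*qK))) := by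
    intro v
    rw [show L+1 = (L-2)+3 from by omega, Finset.prod_range_add]
    congr 1
    rw [Finset.prod_range_succ, Finset.prod_range_succ, Finset.prod_range_one]
    have e0 : L-2+0+1 = L-1 := by omega
    have e1 : L-2+1+1 = L-1+1 := by omega
    rw [e0, e1]
    ring
  rw [hsplit ω, hsplit (ω*ω)]
  -- RHS computation
  have hne1 : (∏ k ∈ Finset.range (L-2), (1 + qK ^ (k+1))) ≠ 0 :=
    Finset.prod_ne_zero_iff.mpr (fun k _ => one_add_qK_pow_ne (k+1))
  have h1mq : (1:K) - qK ≠ 0 := by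
    have := one_sub_qK_pow_ne 1 le_rfl
    rwa [pow_one] at this
  have hP3 : φ (qPoch (-1) (Xq ^ 3) (L-1))
      = (∏ k ∈ Finset.range (L-2), (1 + (qK ^ 3) ^ (k+1))) * 2 := by
    unfold qPoch
    rw [map_prod]
    have : ∀ k ∈ Finset.range (L-1),
        φ (1 - (-1) * (Xq ^ 3) ^ k) = 1 + (qK ^ 3) ^ k := by
      intro k _
      rw [map_sub, map_one, map_mul, map_neg, map_one, map_pow, map_pow]
      rw [show φ Xq = qK from rfl]
      ring
    rw [Finset.prod_congr rfl this, show L-1 = (L-2)+1 from by omega, Finset.prod_range_succ']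
    norm_num
  have hP1 : φ (qPoch (-1) Xq (L-1))
      = (∏ k ∈ Finset.range (L-2), (1 + qK ^ (k+1))) * 2 := by
    unfold qPoch
    rw [map_prod]
    have : ∀ k ∈ Finset.range (L-1),
        φ (1 - (-1) * Xq ^ k) = 1 + qK ^ k := by
      intro k _
      rw [map_sub, map_one, map_mul, map_neg, map_one, map_pow]
      rw [show φ Xq = qK from rfl]
      ring
    rw [Finset.prod_congr rfl this, show L-1 = (L-2)+1 from by omega, Finset.prod_range_succ']
    norm_num
  have hD : (∏ k ∈ Finset.range (L-2), (1 + (ω*ω)*qK ^ (k+1))) *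
      (∏ k ∈ Finset.range (L-2), (1 + ω*qK ^ (k+1))) *
      (∏ k ∈ Finset.range (L-2), (1 + qK ^ (k+1)))
      = ∏ k ∈ Finset.range (L-2), (1 + (qK ^ 3) ^ (k+1)) := by
    rw [← Finset.prod_mul_distrib, ← Finset.prod_mul_distrib]
    apply Finset.prod_congr rfl
    intro k _
    rw [cubefact (qK ^ (k+1))]
    congr 1
    rw [← pow_add, ← pow_add, ← pow_mul]
    congr 1
    ring
  have hRHS : φ (qPoch (-1) (Xq ^ 3) (L - 1) / qPoch (-1) Xq (L - 1) * Xq ^ (L - 1) *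
        ((1 - Xq ^ 3) / (1 - Xq)) * (1 - Xq ^ L))
      = (∏ k ∈ Finset.range (L-2), (1 + ω*qK ^ (k+1))) *
        (∏ k ∈ Finset.range (L-2), (1 + (ω*ω)*qK ^ (k+1))) *
        (qK ^ (L-1) * (1 + qK + qK*qK) * (1 - qK ^ (L-1) * qK)) := by
    rw [map_mul, map_mul, map_mul, map_div₀, map_div₀, map_sub, map_sub, map_sub,
      map_one, map_pow, map_pow, map_pow]
    rw [show φ Xq = qK from rfl, hP3, hP1]
    have h2cancel : ((∏ k ∈ Finset.range (L-2), (1 + (qK ^ 3) ^ (k+1))) * 2) /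
        ((∏ k ∈ Finset.range (L-2), (1 + qK ^ (k+1))) * 2)
        = (∏ k ∈ Finset.range (L-2), (1 + (qK ^ 3) ^ (k+1))) /
          (∏ k ∈ Finset.range (L-2), (1 + qK ^ (k+1))) := by
      rw [mul_comm _ (2:K), mul_comm _ (2:K), mul_div_mul_left _ _ charK2]
    have hgeom : (1 - qK ^ 3)/(1 - qK) = 1 + qK + qK*qK := by
      rw [div_eq_iff h1mq]
      ring
    have hLpow : qK ^ L = qK ^ (L-1) * qK := by
      rw [← pow_succ]
      congr 1
      omega
    have hPD : (∏ k ∈ Finset.range (L-2), (1 + (ω*ω)*qK ^ (k+1))) *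
        (∏ k ∈ Finset.range (L-2), (1 + ω*qK ^ (k+1)))
        = (∏ k ∈ Finset.range (L-2), (1 + (qK ^ 3) ^ (k+1))) /
          (∏ k ∈ Finset.range (L-2), (1 + qK ^ (k+1))) := by
      rw [eq_div_iff hne1]
      exact hD
    rw [h2cancel, hgeom, hLpow, ← hPD]
    ring
  rw [hRHS]
  have trip := tripdiff (qK ^ (L-1)) (qK ^ (L-1)*qK) (qK ^ (L-1)*qK*qK)
  have hs := omega_sum
  set P1 := ∏ k ∈ Finset.range (L-2), (1 + ω*qK ^ (k+1)) with hP1def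
  set P2 := ∏ k ∈ Finset.range (L-2), (1 + (ω*ω)*qK ^ (k+1)) with hP2def
  set a := qK ^ (L-1) with hadef
  -- final algebra
  linear_combination (P1 * P2 * (ω + ω*ω)) * trip +
    (-(ω - ω*ω) * ((a + a*qK + a*qK*qK) - (a*(a*qK) + a*(a*qK*qK) + (a*qK)*(a*qK*qK)))
      * P1 * P2) * hs

end Stmt6Aux

open Stmt6Aux in
/-- Theorem 2.1: for `L ≥ 0`,
`∑_j (j/3) q^{binom(j-1,2)} [2L choose L+j]_q` equals
`((-1;q³)_{L-1}/(-1;q)_{L-1}) q^{L-1} (1-q³)/(1-q) (1-q^L)` for `L > 0`, and `0` for `L = 0`.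
The sum is taken over `-L ≤ j ≤ L`, which covers all nonzero terms. -/
theorem statement6 (L : ℕ) :
    ∑ j ∈ Finset.Icc (-(L : ℤ)) (L : ℤ),
      (leg3 j : RatFunc ℚ) * Xq ^ ((j - 1) * (j - 2) / 2) * qBinom Xq (2 * L) ((L : ℤ) + j) =
    if L = 0 then 0 else
      qPoch (-1) (Xq ^ 3) (L - 1) / qPoch (-1) Xq (L - 1) * Xq ^ (L - 1) *
        ((1 - Xq ^ 3) / (1 - Xq)) * (1 - Xq ^ L) := by
  by_cases h0 : L = 0
  · subst h0
    rw [if_pos rfl]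
    simp [leg3]
  by_cases h1 : L = 1
  · subst h1
    rw [if_neg h0]
    rw [reindex 1]
    rw [show 2*1+1 = 3 from rfl, show (3:ℕ) = 2+1 from rfl, Finset.sum_range_succ,
      show (2:ℕ) = 1+1 from rfl, Finset.sum_range_succ, Finset.sum_range_one]
    have hb0 : qBinom Xq ((2:ℕ):ℤ) ((0:ℕ):ℤ) = 1 := by
      rw [qBinom_nat 2 0 (by omega)]
      have h00 : qPoch Xq Xq 0 = 1 := by simp [qPoch]
      rw [h00, one_mul, Nat.sub_zero, div_self (qPoch_q_ne 2)]
    have hb2 : qBinom Xq ((2:ℕ):ℤ) ((2:ℕ):ℤ) = 1 := by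
      rw [qBinom_nat 2 2 (by omega)]
      have h00 : qPoch Xq Xq 0 = 1 := by simp [qPoch]
      rw [Nat.sub_self, h00, mul_one, div_self (qPoch_q_ne 2)]
    push_cast at hb0 hb2
    have hl0 : leg3 ((0:ℤ) - 1) = -1 := by decide
    have hl1 : leg3 ((1:ℤ) - 1) = 0 := by decide
    have hl2 : leg3 ((2:ℤ) - 1) = 1 := by decide
    rw [show ((0:ℕ):ℤ) = 0 from rfl, show ((1:ℕ):ℤ) = 1 from rfl, show ((2:ℕ):ℤ) = 2 from rfl]
    rw [hl0, hl1, hl2]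
    rw [show (1:ℤ) + (0 - 1) = 0 from by ring, show (1:ℤ) + (1 - 1) = 1 from by ring,
      show (1:ℤ) + (2 - 1) = 2 from by ring, show ((2:ℤ) * 1) = 2 from by ring]
    rw [hb0, hb2]
    rw [show (((0:ℤ)-1-1) * ((0:ℤ)-1-2) / 2) = 3 from by decide,
      show (((2:ℤ)-1-1) * ((2:ℤ)-1-2) / 2) = 0 from by decide]
    rw [show (3:ℤ) = ((3:ℕ):ℤ) from rfl, zpow_natCast, zpow_zero]
    rw [show (1:ℕ)-1 = 0 from rfl, qPoch_zero, qPoch_zero, pow_zero, pow_one]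
    have h1mq : (1:F) - Xq ≠ 0 := by
      have := one_sub_Xq_pow_ne 1 le_rfl
      rwa [pow_one] at this
    push_cast
    field_simp
    ring
  · rw [if_neg h0]
    exact main2 L (by omega)
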